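/- If W = ξ₁ + ⋯ + ξₙ is a sum of independent integer-valued random variables with finite variances σᵢ² > 0, and if I is an independent random index with P(I = i) = σᵢ²/∑ⱼσⱼ², and ξᵢ* has the discrete ξᵢ-zero biased distribution and is independent of (ξⱼ)_{j≠i}, then W* := W − ξ_I + ξ_I* has the discrete W-zero biased distribution. -/

import Mathlib

open MeasureTheory ProbabilityTheory

lemma indep_integral_fubini {Ω : Type*} [MeasurableSpace Ω] (P : Measure Ω)
    [IsProbabilityMeasure P]
    {X Y : Ω → ℤ} (hX : Measurable X) (hY : Measurable Y) (hXY : IndepFun X Y P)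
    (g : ℤ → ℤ → ℝ) (hint : Integrable (fun ω => g (X ω) (Y ω)) P) :
    ∫ ω, g (X ω) (Y ω) ∂P = ∫ x, ∫ y, g x y ∂(P.map Y) ∂(P.map X) := by
  have hg : Measurable (Function.uncurry g) := measurable_of_countable _
  have hmap : P.map (fun ω => (X ω, Y ω)) = (P.map X).prod (P.map Y) :=
    (indepFun_iff_map_prod_eq_prod_map_map hX.aemeasurable hY.aemeasurable).mp hXY
  have h1 : ∫ ω, g (X ω) (Y ω) ∂P
      = ∫ p, Function.uncurry g p ∂(P.map (fun ω => (X ω, Y ω))) :=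
    (integral_map (hX.prodMk hY).aemeasurable hg.aestronglyMeasurable).symm
  have hint2 : Integrable (Function.uncurry g) ((P.map X).prod (P.map Y)) := by
    rw [← hmap, integrable_map_measure hg.aestronglyMeasurable
      (hX.prodMk hY).aemeasurable]
    exact hint
  rw [h1, hmap, integral_prod _ hint2]; rfl

/-- A sum of independent integer-valued random variables is discrete zero-biased by
replacing a summand chosen with probability proportional to its variance by an
independent variable having that summand's discrete zero biased distribution. -/
theorem sum_discrete_zero_bias
    {Ω : Type*} [MeasurableSpace Ω] (P : Measure Ω) [IsProbabilityMeasure P]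
    (n : ℕ) (ξ ξs : Fin n → Ω → ℤ) (I : Ω → Fin n)
    (hξ : ∀ i, Measurable (ξ i)) (hξs : ∀ i, Measurable (ξs i)) (hI : Measurable I)
    (μ σ2 : Fin n → ℝ) (hσ : ∀ i, 0 < σ2 i)
    (hsq : ∀ i, Integrable (fun ω => ((ξ i ω : ℝ)) ^ 2) P)
    (hmean : ∀ i, ∫ ω, (ξ i ω : ℝ) ∂P = μ i)
    (hvar : ∀ i, ∫ ω, ((ξ i ω : ℝ) - μ i) ^ 2 ∂P = σ2 i)
    -- the ξᵢ are independent
    (hindep : iIndepFun ξ P)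
    -- each ξᵢ* has the discrete ξᵢ-zero biased distribution
    (hzb : ∀ i, ∀ f : ℤ → ℝ, (∃ C, ∀ k, |f k| ≤ C) →
      ∫ ω, ((ξ i ω : ℝ) - μ i) * f (ξ i ω) ∂P
        = σ2 i * ∫ ω, (f (ξs i ω + 1) - f (ξs i ω)) ∂P)
    -- ξᵢ* is independent of the remaining variables (ξⱼ)_{j ≠ i}
    (hindeps : ∀ i, IndepFun (ξs i)
      (fun ω => (fun j : {j : Fin n // j ≠ i} => ξ (j : Fin n) ω)) P)
    -- the random index I is independent of all the ξⱼ's and ξⱼ*'s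
    (hindepI : IndepFun I
      (fun ω => ((fun j => ξ j ω, fun j => ξs j ω) : (Fin n → ℤ) × (Fin n → ℤ))) P)
    -- I is chosen with probability proportional to variance
    (hIdist : ∀ i, (P {ω | I ω = i}).toReal = σ2 i / ∑ j, σ2 j) :
    ∀ f : ℤ → ℝ, (∃ C, ∀ k, |f k| ≤ C) →
      ∫ ω, ((∑ i, ξ i ω : ℤ) - (∑ i, μ i) : ℝ) * f (∑ i, ξ i ω) ∂P
        = (∑ i, σ2 i) *
          ∫ ω, (f ((∑ i, ξ i ω) - ξ (I ω) ω + ξs (I ω) ω + 1)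
            - f ((∑ i, ξ i ω) - ξ (I ω) ω + ξs (I ω) ω)) ∂P := by
  classical
  intro f hfb
  obtain ⟨C, hC⟩ := hfb
  have hC0 : 0 ≤ C := (abs_nonneg _).trans (hC 0)
  have hfm : Measurable f := measurable_of_countable f
  have hcast : Measurable (fun k : ℤ => (k : ℝ)) := measurable_of_countable _
  have hξR : ∀ i, Measurable (fun ω => (ξ i ω : ℝ)) := fun i => hcast.comp (hξ i)
  have hintξ : ∀ i, Integrable (fun ω => (ξ i ω : ℝ)) P := by
    intro i
    refine ((hsq i).add (integrable_const 1)).mono' (hξR i).aestronglyMeasurable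
      (Filter.Eventually.of_forall fun ω => ?_)
    simp only [Real.norm_eq_abs, Pi.add_apply]
    nlinarith [sq_nonneg (|(ξ i ω : ℝ)| - 1), sq_abs ((ξ i ω : ℝ))]
  have hintξμ : ∀ i, Integrable (fun ω => (ξ i ω : ℝ) - μ i) P := fun i =>
    (hintξ i).sub (integrable_const _)
  -- the sum without the i-th summand
  set S : Fin n → Ω → ℤ := fun i ω => ∑ j ∈ Finset.univ.erase i, ξ j ω with hS
  have hSmeas : ∀ i, Measurable (S i) := fun i =>
    Finset.measurable_sum _ fun j _ => hξ j
  have hWS : ∀ i ω, (∑ j, ξ j ω) = ξ i ω + S i ω := fun i ω =>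
    (Finset.add_sum_erase _ _ (Finset.mem_univ i)).symm
  -- ξ i is independent of S i
  have hindS : ∀ i, IndepFun (ξ i) (S i) P := by
    intro i
    have h := hindep.indepFun_finset_sum_of_notMem hξ
      (Finset.notMem_erase i Finset.univ)
    have he : (∑ j ∈ Finset.univ.erase i, ξ j) = S i := by
      funext ω; simp [hS, Finset.sum_apply]
    rw [he] at h
    exact h.symm
  -- ξs i is independent of S i
  have hindsS : ∀ i, IndepFun (ξs i) (S i) P := by
    intro i
    have hφ : Measurable (fun v : {j : Fin n // j ≠ i} → ℤ => ∑ j, v j) :=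
      Finset.measurable_sum _ fun j _ => measurable_pi_apply j
    have h := (hindeps i).comp measurable_id hφ
    have he : ((fun v : {j : Fin n // j ≠ i} → ℤ => ∑ j, v j) ∘
        (fun ω => fun j : {j : Fin n // j ≠ i} => ξ (j : Fin n) ω)) = S i := by
      funext ω
      simp only [Function.comp_apply, hS]
      exact (Finset.sum_subtype (p := fun j => j ≠ i) (Finset.univ.erase i)
        (fun x => by simp) (fun j => ξ j ω)).symm
    rw [he] at h
    exact h
  -- bounded measurable functions are integrable
  have hbdd : ∀ (g : Ω → ℝ) (D : ℝ), Measurable g → (∀ ω, |g ω| ≤ D) →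
      Integrable g P := fun g D hm hb =>
    (integrable_const D).mono' hm.aestronglyMeasurable
      (Filter.Eventually.of_forall fun ω => by simpa using hb ω)
  have habs2 : ∀ a b : ℝ, |a - b| ≤ |a| + |b| := by
    intro a b
    rw [sub_eq_add_neg]
    exact (abs_add_le _ _).trans (by rw [abs_neg])
  -- Key lemma A
  have keyA : ∀ i, ∫ ω, ((ξ i ω : ℝ) - μ i) * f (∑ j, ξ j ω) ∂P
      = σ2 i * ∫ ω, (f ((∑ j, ξ j ω) - ξ i ω + ξs i ω + 1)
          - f ((∑ j, ξ j ω) - ξ i ω + ξs i ω)) ∂P := by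
    intro i
    set g : ℤ → ℤ → ℝ := fun s x => ((x : ℝ) - μ i) * f (x + s) with hg
    have hint1 : Integrable (fun ω => g (S i ω) (ξ i ω)) P := by
      have := (hintξμ i).bdd_mul
        ((hfm.comp ((hξ i).add (hSmeas i))).aestronglyMeasurable)
        (c := C) (Filter.Eventually.of_forall fun ω => by simpa using hC (ξ i ω + S i ω))
      simpa [hg, mul_comm] using this
    have step1 := indep_integral_fubini P (hSmeas i) (hξ i) (hindS i).symm g hint1
    have step2 : ∀ s : ℤ, ∫ x, g s x ∂(P.map (ξ i))
        = σ2 i * ∫ y, (f (y + 1 + s) - f (y + s)) ∂(P.map (ξs i)) := by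
      intro s
      rw [integral_map (hξ i).aemeasurable (measurable_of_countable _).aestronglyMeasurable,
        integral_map (hξs i).aemeasurable (measurable_of_countable _).aestronglyMeasurable]
      exact hzb i (fun k => f (k + s)) ⟨C, fun k => hC _⟩
    have hint3 : Integrable (fun ω => f (ξs i ω + 1 + S i ω) - f (ξs i ω + S i ω)) P := by
      refine hbdd _ (C + C) ?_ ?_
      · exact (hfm.comp (((hξs i).add_const 1).add (hSmeas i))).sub
          (hfm.comp ((hξs i).add (hSmeas i)))
      · intro ω; exact (habs2 _ _).trans (add_le_add (hC _) (hC _))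
    have step3 : ∫ s, σ2 i * ∫ y, (f (y + 1 + s) - f (y + s)) ∂(P.map (ξs i)) ∂(P.map (S i))
        = σ2 i * ∫ ω, (f (ξs i ω + 1 + S i ω) - f (ξs i ω + S i ω)) ∂P := by
      rw [integral_const_mul]
      congr 1
      exact (indep_integral_fubini P (hSmeas i) (hξs i) (hindsS i).symm
        (fun s y => f (y + 1 + s) - f (y + s)) hint3).symm
    calc ∫ ω, ((ξ i ω : ℝ) - μ i) * f (∑ j, ξ j ω) ∂P
        = ∫ ω, g (S i ω) (ξ i ω) ∂P := by
          refine integral_congr_ae (Filter.Eventually.of_forall fun ω => ?_)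
          simp only [hg]
          rw [hWS i ω]
      _ = ∫ s, ∫ x, g s x ∂(P.map (ξ i)) ∂(P.map (S i)) := step1
      _ = ∫ s, σ2 i * ∫ y, (f (y + 1 + s) - f (y + s)) ∂(P.map (ξs i)) ∂(P.map (S i)) :=
          integral_congr_ae (Filter.Eventually.of_forall fun s => step2 s)
      _ = σ2 i * ∫ ω, (f (ξs i ω + 1 + S i ω) - f (ξs i ω + S i ω)) ∂P := step3
      _ = σ2 i * ∫ ω, (f ((∑ j, ξ j ω) - ξ i ω + ξs i ω + 1)
            - f ((∑ j, ξ j ω) - ξ i ω + ξs i ω)) ∂P := by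
          congr 1
          refine integral_congr_ae (Filter.Eventually.of_forall fun ω => ?_)
          have h := hWS i ω
          show f (ξs i ω + 1 + S i ω) - f (ξs i ω + S i ω)
            = f ((∑ j, ξ j ω) - ξ i ω + ξs i ω + 1) - f ((∑ j, ξ j ω) - ξ i ω + ξs i ω)
          rw [show ξs i ω + 1 + S i ω = (∑ j, ξ j ω) - ξ i ω + ξs i ω + 1 by omega,
            show ξs i ω + S i ω = (∑ j, ξ j ω) - ξ i ω + ξs i ω by omega]
  -- the per-index difference functions
  set gi : Fin n → Ω → ℝ := fun i ω => f ((∑ j, ξ j ω) - ξ i ω + ξs i ω + 1)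
      - f ((∑ j, ξ j ω) - ξ i ω + ξs i ω) with hgi
  have hgimeas : ∀ i, Measurable (gi i) := by
    intro i
    have hZ : Measurable (fun ω => (∑ j, ξ j ω) - ξ i ω + ξs i ω) :=
      (((Finset.measurable_sum Finset.univ (fun j _ => hξ j)).sub (hξ i)).add (hξs i))
    exact (hfm.comp (hZ.add_const 1)).sub (hfm.comp hZ)
  have hgibdd : ∀ i ω, |gi i ω| ≤ C + C := fun i ω =>
    (habs2 _ _).trans (add_le_add (hC _) (hC _))
  have hgiint : ∀ i, Integrable (gi i) P := fun i => hbdd _ (C + C) (hgimeas i) (hgibdd i)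
  -- Key lemma B
  have keyB : ∫ ω, (f ((∑ j, ξ j ω) - ξ (I ω) ω + ξs (I ω) ω + 1)
        - f ((∑ j, ξ j ω) - ξ (I ω) ω + ξs (I ω) ω)) ∂P
      = ∑ i, (σ2 i / ∑ j, σ2 j) * ∫ ω, gi i ω ∂P := by
    have hpt : ∀ ω, (f ((∑ j, ξ j ω) - ξ (I ω) ω + ξs (I ω) ω + 1)
        - f ((∑ j, ξ j ω) - ξ (I ω) ω + ξs (I ω) ω))
        = ∑ i, (if I ω = i then (1 : ℝ) else 0) * gi i ω := by
      intro ω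
      have hsum : ∑ i, (if I ω = i then (1 : ℝ) else 0) * gi i ω = gi (I ω) ω := by
        rw [Finset.sum_eq_single (I ω)]
        · rw [if_pos rfl, one_mul]
        · intro j _ hj
          rw [if_neg (Ne.symm hj), zero_mul]
        · intro h; exact absurd (Finset.mem_univ _) h
      rw [hsum]
    have hindm : ∀ i : Fin n, Measurable (fun ω => if I ω = i then (1 : ℝ) else 0) :=
      fun i => (measurable_of_countable (fun j : Fin n => if j = i then (1:ℝ) else 0)).comp hI
    have hindint : ∀ i : Fin n, Integrable (fun ω => if I ω = i then (1 : ℝ) else 0) P := by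
      intro i
      refine hbdd _ 1 (hindm i) fun ω => ?_
      by_cases h : I ω = i <;> simp [h]
    have htermint : ∀ i : Fin n,
        Integrable (fun ω => (if I ω = i then (1 : ℝ) else 0) * gi i ω) P := by
      intro i
      refine hbdd _ (C + C) ((hindm i).mul (hgimeas i)) fun ω => ?_
      rw [abs_mul]
      calc |if I ω = i then (1:ℝ) else 0| * |gi i ω| ≤ 1 * (C + C) := by
            refine mul_le_mul ?_ (hgibdd i ω) (abs_nonneg _) zero_le_one
            by_cases h : I ω = i <;> simp [h]
        _ = C + C := one_mul _
    have hmul : ∀ i : Fin n, ∫ ω, (if I ω = i then (1 : ℝ) else 0) * gi i ω ∂P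
        = (σ2 i / ∑ j, σ2 j) * ∫ ω, gi i ω ∂P := by
      intro i
      have hφ : Measurable (fun j : Fin n => if j = i then (1 : ℝ) else 0) :=
        measurable_of_countable _
      have hψ : Measurable (fun p : (Fin n → ℤ) × (Fin n → ℤ) =>
          f ((∑ j, p.1 j) - p.1 i + p.2 i + 1) - f ((∑ j, p.1 j) - p.1 i + p.2 i)) := by
        have hA : Measurable (fun p : (Fin n → ℤ) × (Fin n → ℤ) => ∑ j, p.1 j) :=
          Finset.measurable_sum Finset.univ (fun j _ =>
            (measurable_pi_apply j).comp measurable_fst)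
        have hB : Measurable (fun p : (Fin n → ℤ) × (Fin n → ℤ) => p.1 i) :=
          (measurable_pi_apply i).comp measurable_fst
        have hB' : Measurable (fun p : (Fin n → ℤ) × (Fin n → ℤ) => p.2 i) :=
          (measurable_pi_apply i).comp measurable_snd
        have hZ : Measurable (fun p : (Fin n → ℤ) × (Fin n → ℤ) =>
            (∑ j, p.1 j) - p.1 i + p.2 i) := (hA.sub hB).add hB'
        exact (hfm.comp (hZ.add_const 1)).sub (hfm.comp hZ)
      have hind := hindepI.comp hφ hψ
      have := hind.integral_fun_mul_eq_mul_integral (hindint i).aestronglyMeasurable (hgiint i).aestronglyMeasurable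
      have hindval : ∫ ω, (if I ω = i then (1 : ℝ) else 0) ∂P
          = (σ2 i / ∑ j, σ2 j) := by
        have he : (fun ω => if I ω = i then (1 : ℝ) else 0)
            = Set.indicator (I ⁻¹' {i}) (fun _ => (1 : ℝ)) := by
          funext ω
          simp [Set.indicator_apply, Set.mem_preimage]
        rw [he, integral_indicator_const _ (hI (measurableSet_singleton i)),
          smul_eq_mul, mul_one, ← hIdist i]
        rfl
      calc ∫ ω, (if I ω = i then (1 : ℝ) else 0) * gi i ω ∂P
          = (∫ ω, (if I ω = i then (1 : ℝ) else 0) ∂P) * ∫ ω, gi i ω ∂P := this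
        _ = (σ2 i / ∑ j, σ2 j) * ∫ ω, gi i ω ∂P := by rw [hindval]
    calc ∫ ω, (f ((∑ j, ξ j ω) - ξ (I ω) ω + ξs (I ω) ω + 1)
          - f ((∑ j, ξ j ω) - ξ (I ω) ω + ξs (I ω) ω)) ∂P
        = ∫ ω, ∑ i, (if I ω = i then (1 : ℝ) else 0) * gi i ω ∂P :=
          integral_congr_ae (Filter.Eventually.of_forall hpt)
      _ = ∑ i, ∫ ω, (if I ω = i then (1 : ℝ) else 0) * gi i ω ∂P :=
          integral_finset_sum _ (fun i _ => htermint i)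
      _ = ∑ i, (σ2 i / ∑ j, σ2 j) * ∫ ω, gi i ω ∂P :=
          Finset.sum_congr rfl (fun i _ => hmul i)
  -- assemble
  have hLHS : ∫ ω, ((∑ i, ξ i ω : ℤ) - (∑ i, μ i) : ℝ) * f (∑ i, ξ i ω) ∂P
      = ∑ i, ∫ ω, ((ξ i ω : ℝ) - μ i) * f (∑ j, ξ j ω) ∂P := by
    have h1 : ∀ ω, ((∑ i, ξ i ω : ℤ) - (∑ i, μ i) : ℝ) * f (∑ i, ξ i ω)
        = ∑ i, ((ξ i ω : ℝ) - μ i) * f (∑ j, ξ j ω) := by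
      intro ω
      rw [← Finset.sum_mul]
      congr 1
      push_cast
      rw [Finset.sum_sub_distrib]
    rw [integral_congr_ae (Filter.Eventually.of_forall h1)]
    refine integral_finset_sum _ (fun i _ => ?_)
    have := (hintξμ i).bdd_mul
      ((hfm.comp (Finset.measurable_sum Finset.univ (fun j _ => hξ j))).aestronglyMeasurable)
      (c := C) (Filter.Eventually.of_forall fun ω => by simpa using hC (∑ j, ξ j ω))
    simpa [mul_comm] using this
  rw [hLHS, keyB, Finset.mul_sum]
  refine Finset.sum_congr rfl (fun i _ => ?_)
  rw [keyA i]
  have hSpos : (0:ℝ) < ∑ j, σ2 j := Finset.sum_pos (fun j _ => hσ j) ⟨i, Finset.mem_univ i⟩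
  have hne : (∑ j, σ2 j) ≠ 0 := ne_of_gt hSpos
  have hc : (∑ j, σ2 j) * (σ2 i / ∑ j, σ2 j) = σ2 i := by field_simp
  rw [← mul_assoc, hc]
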